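/- Any C³ game with a finite user set played under a Backward Rewarding Mechanism M[f₁,…,fₙ] is an exact potential game, with exact potential P(s) = Σ_{x∈X} Σ_{k=1}^{n} ∫₀^{σ_{(k)}(x)} f_k(t) dt − Σᵢ cᵢ(sᵢ), where σ_{(k)}(x) is the k-th largest matching score at user x under profile s: for every creator i, every profile s, and every deviation s'ᵢ ∈ Sᵢ, uᵢ(s'ᵢ, s₋ᵢ) − uᵢ(s) = P(s'ᵢ, s₋ᵢ) − P(s). -/

import Mathlib

open MeasureTheory

/-- A score vector is "sorted" if it is nonincreasing and takes values in `[0,1]`. -/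
def SortedScores (n : ℕ) (σ : Fin n → ℝ) : Prop :=
  (∀ i j : Fin n, i ≤ j → σ j ≤ σ i) ∧ ∀ i, σ i ∈ Set.Icc (0:ℝ) 1

/-- The sorted score vector consisting of `k` ones followed by zeros. -/
def onesVec (n k : ℕ) : Fin n → ℝ := fun i => if (i : ℕ) < k then 1 else 0

/-- The defining hypotheses on the family `f₁, …, fₙ` of a Backward Rewarding
Mechanism: each `f k` is integrable on `[0,1]`, nonnegative on `[0,1]`,
pointwise nonincreasing in the index `k`, and `f₁ > 0` on `[0,1]`. -/
def BRMHyp {n : ℕ} (f : Fin n → ℝ → ℝ) : Prop :=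
  (∀ k, IntervalIntegrable (f k) volume 0 1) ∧
  (∀ k, ∀ t ∈ Set.Icc (0:ℝ) 1, 0 ≤ f k t) ∧
  (∀ k k' : Fin n, k ≤ k' → ∀ t ∈ Set.Icc (0:ℝ) 1, f k' t ≤ f k t) ∧
  (∀ k : Fin n, (k : ℕ) = 0 → ∀ t ∈ Set.Icc (0:ℝ) 1, 0 < f k t)

/-- `σ_{k+1}`, with the convention `σ_{n+1} = 0`. -/
def nextVal {n : ℕ} (σ : Fin n → ℝ) (k : Fin n) : ℝ :=
  if h : (k : ℕ) + 1 < n then σ ⟨(k : ℕ) + 1, h⟩ else 0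

/-- The BRM reward of the creator at (0-indexed) rank `p` of the nonincreasing score
vector `σ`: `∑_{k ≥ p} ∫_{σ_{k+1}}^{σ_k} f_k(t) dt`. -/
noncomputable def brmRankedN {n : ℕ} (f : Fin n → ℝ → ℝ) (σ : Fin n → ℝ) (p : ℕ) : ℝ :=
  ∑ k : Fin n, if p ≤ (k : ℕ) then ∫ t in (nextVal σ k)..(σ k), f k t else 0

/-- The BRM reward of the creator holding the `i`-th largest score of the
nonincreasing score vector `σ` (0-indexed). -/
noncomputable def brmRanked {n : ℕ} (f : Fin n → ℝ → ℝ) (σ : Fin n → ℝ) (i : Fin n) : ℝ :=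
  brmRankedN f σ (i : ℕ)

/-- The nonincreasing rearrangement of an arbitrary score vector:
`sortDesc σ k` is the `k`-th largest entry of `σ` (0-indexed). -/
noncomputable def sortDesc {n : ℕ} (σ : Fin n → ℝ) : Fin n → ℝ :=
  fun k => σ (Tuple.sort σ k.rev)

/-- The (0-indexed) rank of creator `i` in the score vector `σ`, ties broken by index. -/
noncomputable def rankCount {n : ℕ} (σ : Fin n → ℝ) (i : Fin n) : ℕ :=
  (Finset.univ.filter fun j => σ i < σ j ∨ (σ i = σ j ∧ j < i)).card

/-- Creator `i`'s BRM reward on an arbitrary score vector `σ ∈ [0,1]ⁿ`. -/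
noncomputable def brmRewardAt {n : ℕ} (f : Fin n → ℝ → ℝ) (σ : Fin n → ℝ) (i : Fin n) : ℝ :=
  brmRankedN f (sortDesc σ) (rankCount σ i)

/-- The BRM potential `Φ(σ) = ∑_k ∫₀^{σ_(k)} f_k(t) dt`. -/
noncomputable def brmPotential {n : ℕ} (f : Fin n → ℝ → ℝ) (σ : Fin n → ℝ) : ℝ :=
  ∑ k : Fin n, ∫ t in (0:ℝ)..(sortDesc σ k), f k t

/-- Creator `i`'s utility in a C³ game with finite user set `U` under the mechanism with
per-user rewards `brmRewardAt f`: total reward over all users minus the production cost. -/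
noncomputable def c3Utility {n : ℕ} {U : Type*} [Fintype U] (f : Fin n → ℝ → ℝ)
    (S : Fin n → Type*) (score : ∀ i, S i → U → ℝ) (c : ∀ i, S i → ℝ)
    (s : ∀ i, S i) (i : Fin n) : ℝ :=
  (∑ x : U, brmRewardAt f (fun j => score j (s j) x) i) - c i (s i)

/-- The potential `P(s) = ∑_x ∑_k ∫₀^{σ_(k)(x)} f_k(t) dt − ∑_i c_i(s_i)`. -/
noncomputable def c3Potential {n : ℕ} {U : Type*} [Fintype U] (f : Fin n → ℝ → ℝ)
    (S : Fin n → Type*) (score : ∀ i, S i → U → ℝ) (c : ∀ i, S i → ℝ)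
    (s : ∀ i, S i) : ℝ :=
  (∑ x : U, brmPotential f (fun j => score j (s j) x)) - ∑ i, c i (s i)
section Aux

/-- The multiset of values of a tuple. -/
noncomputable def msum {m : ℕ} (g : Fin m → ℝ) : Multiset ℝ :=
  ∑ j : Fin m, ({g j} : Multiset ℝ)

lemma msum_comp_equiv {m : ℕ} (g : Fin m → ℝ) (e : Equiv.Perm (Fin m)) :
    msum (fun k => g (e k)) = msum g :=
  Fintype.sum_equiv e _ _ (fun _ => rfl)

lemma ofFn_coe_eq_msum {m : ℕ} (g : Fin m → ℝ) :
    (↑(List.ofFn g) : Multiset ℝ) = msum g := by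
  induction m with
  | zero => simp [msum]
  | succ m ih =>
    rw [List.ofFn_succ, ← Multiset.cons_coe, ih, msum, msum, Fin.sum_univ_succ,
      Multiset.singleton_add]

lemma antitone_unique {m : ℕ} {g h : Fin m → ℝ}
    (hg : ∀ a b : Fin m, a ≤ b → g b ≤ g a) (hh : ∀ a b : Fin m, a ≤ b → h b ≤ h a)
    (hm : msum g = msum h) : g = h := by
  have hsg : (List.ofFn g).Pairwise (fun a b : ℝ => b ≤ a) :=
    List.pairwise_ofFn.2 (fun a b hab => hg a b hab.le)
  have hsh : (List.ofFn h).Pairwise (fun a b : ℝ => b ≤ a) :=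
    List.pairwise_ofFn.2 (fun a b hab => hh a b hab.le)
  have hperm : (List.ofFn g).Perm (List.ofFn h) := by
    have : (↑(List.ofFn g) : Multiset ℝ) = ↑(List.ofFn h) := by
      rw [ofFn_coe_eq_msum, ofFn_coe_eq_msum, hm]
    exact Quotient.exact this
  have : IsAntisymm ℝ (fun a b : ℝ => b ≤ a) := ⟨fun a b h1 h2 => le_antisymm h2 h1⟩
  exact List.ofFn_injective (List.Perm.eq_of_pairwise (fun a b _ _ h1 h2 => le_antisymm h2 h1) hsg hsh hperm)
lemma mem_iff_lt_card {m : ℕ} (Q : Fin m → Prop) [DecidablePred Q]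
    (hQ : ∀ a b : Fin m, a ≤ b → Q b → Q a) (k : Fin m) :
    Q k ↔ (k : ℕ) < (Finset.univ.filter Q).card := by
  constructor
  · intro hk
    have hsub : Finset.Iic k ⊆ Finset.univ.filter Q := fun j hj =>
      Finset.mem_filter.2 ⟨Finset.mem_univ _, hQ j k (Finset.mem_Iic.1 hj) hk⟩
    have := Finset.card_le_card hsub
    rw [Fin.card_Iic] at this; omega
  · intro hk
    by_contra hnk
    have hsub : Finset.univ.filter Q ⊆ Finset.Iio k := by
      intro j hj
      rw [Finset.mem_Iio]
      by_contra hjk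
      exact hnk (hQ k j (le_of_not_gt hjk) ((Finset.mem_filter.1 hj).2))
    have := Finset.card_le_card hsub
    rw [Fin.card_Iio] at this; omega

lemma card_filter_comp {m : ℕ} (g : Fin m → ℝ) (e : Equiv.Perm (Fin m))
    (P : ℝ → Prop) [DecidablePred P] :
    (Finset.univ.filter fun k => P (g (e k))).card
      = (Finset.univ.filter fun j => P (g j)).card := by
  apply Finset.card_bij (fun a _ => e a)
  · intro a ha
    simp only [Finset.mem_filter, Finset.mem_univ, true_and] at ha ⊢
    exact ha
  · intro a _ b _ hab
    exact e.injective hab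
  · intro b hb
    refine ⟨e.symm b, ?_, by simp⟩
    simp only [Finset.mem_filter, Finset.mem_univ, true_and] at hb ⊢
    simpa using hb

lemma sortDesc_anti {m : ℕ} (σ : Fin m → ℝ) :
    ∀ a b : Fin m, a ≤ b → sortDesc σ b ≤ sortDesc σ a := by
  intro a b hab
  exact Tuple.monotone_sort σ (Fin.rev_le_rev.2 hab)

lemma sortDesc_eq_comp {m : ℕ} (σ : Fin m → ℝ) :
    sortDesc σ = fun k => σ ((Fin.revPerm.trans (Tuple.sort σ)) k) := rfl

lemma msum_sortDesc {m : ℕ} (σ : Fin m → ℝ) : msum (sortDesc σ) = msum σ := by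
  rw [sortDesc_eq_comp]
  exact msum_comp_equiv σ _

lemma sortDesc_mem {m : ℕ} (σ : Fin m → ℝ) (h : ∀ j, σ j ∈ Set.Icc (0:ℝ) 1) (k : Fin m) :
    sortDesc σ k ∈ Set.Icc (0:ℝ) 1 := h _

lemma rankCount_lt {m : ℕ} (σ : Fin m → ℝ) (i : Fin m) : rankCount σ i < m := by
  have hi : i ∉ Finset.univ.filter (fun j => σ i < σ j ∨ (σ i = σ j ∧ j < i)) := by
    simp
  calc rankCount σ i = (Finset.univ.filter fun j => σ i < σ j ∨ (σ i = σ j ∧ j < i)).card := rfl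
    _ < Finset.univ.card := by
        apply Finset.card_lt_card
        refine (Finset.filter_subset _ _).ssubset_of_ne (fun h => hi ?_)
        rw [h]; exact Finset.mem_univ i
    _ = m := by simp

lemma sortDesc_rank {m : ℕ} (σ : Fin m → ℝ) (i : Fin m) :
    sortDesc σ ⟨rankCount σ i, rankCount_lt σ i⟩ = σ i := by
  classical
  set τ := sortDesc σ with hτdef
  set p := rankCount σ i with hpdef
  have hτ := sortDesc_anti σ
  have ha : (Finset.univ.filter fun k => σ i < τ k).card
      = (Finset.univ.filter fun j => σ i < σ j).card := by
    rw [hτdef, sortDesc_eq_comp]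
    exact card_filter_comp σ _ (fun t => σ i < t)
  have hb : (Finset.univ.filter fun k => σ i ≤ τ k).card
      = (Finset.univ.filter fun j => σ i ≤ σ j).card := by
    rw [hτdef, sortDesc_eq_comp]
    exact card_filter_comp σ _ (fun t => σ i ≤ t)
  have hQa : ∀ a b : Fin m, a ≤ b → σ i < τ b → σ i < τ a :=
    fun a b hab h => lt_of_lt_of_le h (hτ a b hab)
  have hQb : ∀ a b : Fin m, a ≤ b → σ i ≤ τ b → σ i ≤ τ a :=
    fun a b hab h => le_trans h (hτ a b hab)
  have h1 : (Finset.univ.filter fun j => σ i < σ j).card ≤ p := by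
    rw [hpdef]
    apply Finset.card_le_card
    intro j hj
    rw [Finset.mem_filter] at hj ⊢
    exact ⟨hj.1, Or.inl hj.2⟩
  have h2 : p < (Finset.univ.filter fun j => σ i ≤ σ j).card := by
    rw [hpdef]
    apply Finset.card_lt_card
    constructor
    · intro j hj
      rw [Finset.mem_filter] at hj ⊢
      refine ⟨hj.1, ?_⟩
      rcases hj.2 with h | ⟨h, _⟩
      · exact h.le
      · exact h.le
    · intro hsub
      have := hsub (Finset.mem_filter.2 ⟨Finset.mem_univ i, le_refl _⟩)
      simp at this
  set P : Fin m := ⟨p, rankCount_lt σ i⟩ with hP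
  have hge : σ i ≤ τ P := by
    apply (mem_iff_lt_card _ hQb P).2
    rw [hb]
    exact h2
  have hle : τ P ≤ σ i := by
    by_contra h
    push_neg at h
    have := (mem_iff_lt_card _ hQa P).1 h
    rw [ha] at this
    simp only [hP] at this
    omega
  exact le_antisymm hle hge
end Aux
lemma key_step {m : ℕ} (f : Fin (m+1) → ℝ → ℝ) (hf : BRMHyp f) (σ : Fin (m+1) → ℝ)
    (hσ : ∀ j, σ j ∈ Set.Icc (0:ℝ) 1) (i : Fin (m+1)) :
    brmPotential f σ - brmRewardAt f σ i =
      ∑ k : Fin m, ∫ t in (0:ℝ)..(sortDesc (fun k' => σ (i.succAbove k')) k),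
        f k.castSucc t := by
  classical
  set τ := sortDesc σ with hτdef
  set P : Fin (m+1) := ⟨rankCount σ i, rankCount_lt σ i⟩ with hP
  set ρ : Fin m → ℝ := fun k' => σ (i.succAbove k') with hρ
  have hτanti := sortDesc_anti σ
  -- Step D : the sorted rest equals the sorted whole with rank P removed
  have hD : sortDesc ρ = fun k => τ (P.succAbove k) := by
    apply antitone_unique (sortDesc_anti ρ)
    · intro a b hab
      exact hτanti _ _ ((Fin.strictMono_succAbove P).monotone hab)
    · have h1 : msum σ = {σ i} + msum ρ :=
        Fin.sum_univ_succAbove (fun j => ({σ j} : Multiset ℝ)) i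
      have h2 : msum τ = {τ P} + msum (fun k => τ (P.succAbove k)) :=
        Fin.sum_univ_succAbove (fun j => ({τ j} : Multiset ℝ)) P
      have h3 : msum τ = msum σ := msum_sortDesc σ
      have h4 : τ P = σ i := sortDesc_rank σ i
      rw [msum_sortDesc ρ]
      apply add_left_cancel (a := ({σ i} : Multiset ℝ))
      rw [← h1, ← h3, h2, h4]
  -- basic bounds
  have hτ0 : ∀ k, 0 ≤ τ k := fun k => (sortDesc_mem σ hσ k).1
  have hτ1 : ∀ k, τ k ≤ 1 := fun k => (sortDesc_mem σ hσ k).2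
  have hντ : ∀ k, nextVal τ k ≤ τ k := by
    intro k
    unfold nextVal
    split
    · exact hτanti k _ (by rw [Fin.le_def]; simp)
    · exact hτ0 k
  have hν0 : ∀ k, 0 ≤ nextVal τ k := by
    intro k
    unfold nextVal
    split
    · exact hτ0 _
    · exact le_refl 0
  -- splitting the integral
  have hsplit : ∀ k : Fin (m+1),
      (∫ t in (0:ℝ)..(τ k), f k t) - (∫ t in (nextVal τ k)..(τ k), f k t)
        = ∫ t in (0:ℝ)..(nextVal τ k), f k t := by
    intro k
    have hsub1 : Set.uIcc (0:ℝ) (nextVal τ k) ⊆ Set.uIcc (0:ℝ) 1 := by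
      rw [Set.uIcc_of_le (hν0 k), Set.uIcc_of_le (zero_le_one)]
      exact Set.Icc_subset_Icc le_rfl ((hντ k).trans (hτ1 k))
    have hsub2 : Set.uIcc (nextVal τ k) (τ k) ⊆ Set.uIcc (0:ℝ) 1 := by
      rw [Set.uIcc_of_le (hντ k), Set.uIcc_of_le (zero_le_one)]
      exact Set.Icc_subset_Icc (hν0 k) (hτ1 k)
    have hint1 : IntervalIntegrable (f k) MeasureTheory.volume 0 (nextVal τ k) :=
      (hf.1 k).mono_set hsub1
    have hint2 : IntervalIntegrable (f k) MeasureTheory.volume (nextVal τ k) (τ k) :=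
      (hf.1 k).mono_set hsub2
    have := intervalIntegral.integral_add_adjacent_intervals hint1 hint2
    linarith
  -- step E
  have hpot : brmPotential f σ - brmRewardAt f σ i
      = ∑ k : Fin (m+1), (if rankCount σ i ≤ (k:ℕ)
          then ∫ t in (0:ℝ)..(nextVal τ k), f k t
          else ∫ t in (0:ℝ)..(τ k), f k t) := by
    rw [brmPotential, brmRewardAt, brmRankedN, ← hτdef, ← Finset.sum_sub_distrib]
    apply Finset.sum_congr rfl
    intro k _
    by_cases h : rankCount σ i ≤ (k:ℕ)
    · rw [if_pos h, if_pos h]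
      exact hsplit k
    · rw [if_neg h, if_neg h]
      ring
  rw [hpot]
  simp only [hD]
  rw [Fin.sum_univ_castSucc]
  have hcond : rankCount σ i ≤ ((Fin.last m):ℕ) := by
    have := rankCount_lt σ i
    simp only [Fin.val_last]
    omega
  have h0 : nextVal τ (Fin.last m) = 0 := by
    unfold nextVal
    rw [dif_neg (by simp)]
  have hlast : (if rankCount σ i ≤ ((Fin.last m):ℕ)
      then ∫ t in (0:ℝ)..(nextVal τ (Fin.last m)), f (Fin.last m) t
      else ∫ t in (0:ℝ)..(τ (Fin.last m)), f (Fin.last m) t) = 0 := by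
    rw [if_pos hcond, h0, intervalIntegral.integral_same]
  rw [hlast, add_zero]
  apply Finset.sum_congr rfl
  intro k _
  have hnext : nextVal τ k.castSucc = τ k.succ := by
    unfold nextVal
    rw [dif_pos (by simp)]
    exact congrArg τ (by ext; simp)
  by_cases h : rankCount σ i ≤ (k:ℕ)
  · rw [if_pos (by simpa using h), hnext,
      Fin.succAbove_of_le_castSucc P k (by rw [Fin.le_def]; simpa using h)]
  · rw [if_neg (by simpa using h),
      Fin.succAbove_of_castSucc_lt P k (by rw [Fin.lt_def]; show (k:ℕ) < rankCount σ i; omega)]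

/-- Any C³ game with a finite user set played under a Backward
Rewarding Mechanism is an exact potential game with potential `c3Potential`. -/
theorem stmt10 {n : ℕ} {U : Type*} [Fintype U]
    (S : Fin n → Type*) (score : ∀ i, S i → U → ℝ) (c : ∀ i, S i → ℝ)
    (hscore : ∀ i a x, score i a x ∈ Set.Icc (0:ℝ) 1)
    (f : Fin n → ℝ → ℝ) (hf : BRMHyp f)
    (s : ∀ i, S i) (i : Fin n) (s'i : S i) :
    c3Utility f S score c (Function.update s i s'i) i - c3Utility f S score c s i =
      c3Potential f S score c (Function.update s i s'i) - c3Potential f S score c s := by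
  classical
  rcases n with _ | m
  · exact i.elim0
  set s' := Function.update s i s'i with hs'
  have hU : ∀ x : U,
      brmRewardAt f (fun j => score j (s' j) x) i
        - brmPotential f (fun j => score j (s' j) x)
      = brmRewardAt f (fun j => score j (s j) x) i
        - brmPotential f (fun j => score j (s j) x) := by
    intro x
    have h1 := key_step f hf (fun j => score j (s' j) x) (fun j => hscore _ _ _) i
    have h2 := key_step f hf (fun j => score j (s j) x) (fun j => hscore _ _ _) i
    have hrest : (fun k : Fin m => score (i.succAbove k) (s' (i.succAbove k)) x)
               = (fun k : Fin m => score (i.succAbove k) (s (i.succAbove k)) x) := by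
      funext k
      rw [hs', Function.update_of_ne (Fin.succAbove_ne i k)]
    rw [hrest] at h1
    linarith
  have hRΦ : (∑ x : U, brmRewardAt f (fun j => score j (s' j) x) i)
      - (∑ x : U, brmPotential f (fun j => score j (s' j) x))
      = (∑ x : U, brmRewardAt f (fun j => score j (s j) x) i)
      - (∑ x : U, brmPotential f (fun j => score j (s j) x)) := by
    rw [← Finset.sum_sub_distrib, ← Finset.sum_sub_distrib]
    exact Finset.sum_congr rfl (fun x _ => hU x)
  have hcs : (∑ j, c j (s' j)) - (∑ j, c j (s j)) = c i (s' i) - c i (s i) := by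
    rw [← Finset.add_sum_erase Finset.univ (fun j => c j (s' j)) (Finset.mem_univ i),
      ← Finset.add_sum_erase Finset.univ (fun j => c j (s j)) (Finset.mem_univ i)]
    have he : ∑ j ∈ Finset.univ.erase i, c j (s' j)
        = ∑ j ∈ Finset.univ.erase i, c j (s j) :=
      Finset.sum_congr rfl fun j hj => by
        rw [hs', Function.update_of_ne (Finset.ne_of_mem_erase hj)]
    rw [he]
    ring
  simp only [c3Utility, c3Potential, ← hs']
  have hsi : s' i = s'i := by rw [hs', Function.update_self]
  rw [hsi] at hcs
  rw [hsi]
  linarith
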